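/- Let T1, T2 be bounded linear operators on H with A-adjoints S1 = T1^{#_A}, S2 = T2^{#_A} (i.e. A∘S_i = T_i*∘A and range(S_i) ⊆ closure(range A)). Then min(‖T1+T2‖_A², ‖T1-T2‖_A²) ≥ max(‖S1∘T1 + S2∘T2‖_A - ‖S1∘T2 + S2∘T1‖_A, ‖T1∘S1 + T2∘S2‖_A - ‖T1∘S2 + T2∘S1‖_A). -/

import Mathlib

open scoped InnerProductSpace
open ContinuousLinearMap

variable {H : Type*} [NormedAddCommGroup H] [InnerProductSpace ℂ H] [CompleteSpace H]

/-- The `A`-seminorm `‖x‖_A = √⟨Ax,x⟩`. -/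
noncomputable def aNorm (A : H →L[ℂ] H) (x : H) : ℝ :=
  Real.sqrt (⟪A x, x⟫_ℂ).re

/-- The `A`-numerical radius `w_A(T) = sup {|⟨ATx,x⟩| : x ∈ H, ‖x‖_A = 1}`. -/
noncomputable def wA (A T : H →L[ℂ] H) : ℝ :=
  sSup {r : ℝ | ∃ x : H, aNorm A x = 1 ∧ r = ‖⟪A (T x), x⟫_ℂ‖}

/-- The `A`-operator seminorm `‖T‖_A = sup {‖Tx‖_A : x ∈ closure (range A), ‖x‖_A = 1}`. -/
noncomputable def aOpNorm (A T : H →L[ℂ] H) : ℝ :=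
  sSup {r : ℝ | ∃ x : H, x ∈ closure (Set.range (⇑A)) ∧ aNorm A x = 1 ∧ r = aNorm A (T x)}

/-- The `B`-numerical radius of the operator matrix `[[T1,T2],[T3,T4]]` acting on `H ⊕ H` by
`(x, y) ↦ (T1 x + T2 y, T3 x + T4 y)`, where `B = [[A,0],[0,A]]`:
`w_B(T) = sup {|⟨BTz,z⟩| : z ∈ H ⊕ H, ‖z‖_B = 1}`. -/
noncomputable def wB (A T1 T2 T3 T4 : H →L[ℂ] H) : ℝ :=
  sSup {r : ℝ | ∃ x y : H, Real.sqrt ((⟪A x, x⟫_ℂ).re + (⟪A y, y⟫_ℂ).re) = 1 ∧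
    r = ‖⟪A (T1 x + T2 y), x⟫_ℂ + ⟪A (T3 x + T4 y), y⟫_ℂ‖}

section helpers
variable {A : H →L[ℂ] H}
set_option linter.unusedSectionVars false

lemma re_nonneg' (hA : A.IsPositive) (x : H) : 0 ≤ (⟪A x, x⟫_ℂ).re := by
  simpa [ContinuousLinearMap.reApplyInnerSelf] using hA.2 x

lemma re_symm' (hA : A.IsPositive) (x y : H) : (⟪A x, y⟫_ℂ).re = (⟪A y, x⟫_ℂ).re := by
  have h : ContinuousLinearMap.adjoint A = A := hA.isSelfAdjoint.adjoint_eq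
  have h2 : ⟪A y, x⟫_ℂ = ⟪y, A x⟫_ℂ := by
    conv_lhs => rw [← h]
    exact ContinuousLinearMap.adjoint_inner_left A x y
  rw [h2]
  simpa using inner_re_symm (𝕜 := ℂ) (A x) y

lemma aNorm_nonneg' (x : H) : 0 ≤ aNorm A x := Real.sqrt_nonneg _

lemma aNorm_sq (hA : A.IsPositive) (x : H) : aNorm A x ^ 2 = (⟪A x, x⟫_ℂ).re := by
  rw [aNorm, Real.sq_sqrt (re_nonneg' hA x)]

/-- real Cauchy-Schwarz for the semi-inner product -/
lemma cs' (hA : A.IsPositive) (x y : H) : (⟪A x, y⟫_ℂ).re ≤ aNorm A x * aNorm A y := by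
  set p := (⟪A x, x⟫_ℂ).re with hp
  set q := (⟪A x, y⟫_ℂ).re with hq
  set r := (⟪A y, y⟫_ℂ).re with hr
  have hpn : 0 ≤ p := re_nonneg' hA x
  have hrn : 0 ≤ r := re_nonneg' hA y
  have key : ∀ t : ℝ, 0 ≤ p - 2 * t * q + t ^ 2 * r := by
    intro t
    have h0 := re_nonneg' hA (x - (t : ℂ) • y)
    have e1 : ⟪A (x - (t : ℂ) • y), x - (t : ℂ) • y⟫_ℂ =
        ⟪A x, x⟫_ℂ - (t : ℂ) * ⟪A x, y⟫_ℂ - (t : ℂ) * ⟪A y, x⟫_ℂ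
          + (t : ℂ) * (t : ℂ) * ⟪A y, y⟫_ℂ := by
      simp only [map_sub, map_smul, inner_sub_left, inner_sub_right, inner_smul_left,
        inner_smul_right, Complex.conj_ofReal]
      ring
    rw [e1] at h0
    have e2 : (⟪A y, x⟫_ℂ).re = q := re_symm' hA y x ▸ (re_symm' hA x y).symm
    simp only [Complex.sub_re, Complex.add_re, Complex.mul_re, Complex.mul_im,
      Complex.ofReal_re, Complex.ofReal_im] at h0
    rw [e2] at h0
    rw [hp, hq, hr]
    nlinarith [h0]
  have hq2 : q ^ 2 ≤ p * r := by
    rcases eq_or_lt_of_le hrn with hr0 | hrpos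
    · -- r = 0 : show q = 0
      have hq0 : q = 0 := by
        by_contra hne
        have := key ((p + 1) / (2 * q))
        rw [← hr0] at this
        have h2q : 2 * ((p + 1) / (2 * q)) * q = p + 1 := by
          field_simp
        nlinarith [this]
      rw [hq0, ← hr0]; nlinarith
    · have := key (q / r)
      have h1 : 2 * (q / r) * q = 2 * q ^ 2 / r := by ring
      have h2 : (q / r) ^ 2 * r = q ^ 2 / r := by
        field_simp
      rw [h1, h2] at this
      have h3 : 2 * q ^ 2 / r = 2 * (q ^ 2 / r) := by ring
      rw [h3] at this
      have : q ^ 2 / r ≤ p := by linarith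
      calc q ^ 2 = q ^ 2 / r * r := by field_simp
        _ ≤ p * r := by nlinarith
  have : q ≤ Real.sqrt (p * r) := by
    rcases le_or_gt q 0 with h | h
    · exact h.trans (Real.sqrt_nonneg _)
    · calc q = Real.sqrt (q ^ 2) := by rw [Real.sqrt_sq h.le]
        _ ≤ Real.sqrt (p * r) := Real.sqrt_le_sqrt hq2
  calc (⟪A x, y⟫_ℂ).re = q := rfl
    _ ≤ Real.sqrt (p * r) := this
    _ = aNorm A x * aNorm A y := by rw [Real.sqrt_mul hpn, aNorm, aNorm]

lemma aNorm_add (hA : A.IsPositive) (x y : H) : aNorm A (x + y) ≤ aNorm A x + aNorm A y := by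
  have h1 : aNorm A (x + y) ^ 2 ≤ (aNorm A x + aNorm A y) ^ 2 := by
    rw [aNorm_sq hA]
    have e1 : ⟪A (x + y), x + y⟫_ℂ = ⟪A x, x⟫_ℂ + ⟪A x, y⟫_ℂ + ⟪A y, x⟫_ℂ + ⟪A y, y⟫_ℂ := by
      simp only [map_add, inner_add_left, inner_add_right]; ring
    rw [e1]
    simp only [Complex.add_re]
    have hxy := cs' hA x y
    have hsym := re_symm' hA y x
    have hx2 := aNorm_sq hA x
    have hy2 := aNorm_sq hA y
    nlinarith [aNorm_nonneg' (A := A) x, aNorm_nonneg' (A := A) y]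
  have := Real.sqrt_le_sqrt h1
  rwa [Real.sqrt_sq (aNorm_nonneg' _), Real.sqrt_sq (add_nonneg (aNorm_nonneg' x) (aNorm_nonneg' y))] at this
    
lemma aNorm_le_norm (x : H) : aNorm A x ≤ Real.sqrt ‖A‖ * ‖x‖ := by
  have h : (⟪A x, x⟫_ℂ).re ≤ ‖A‖ * ‖x‖ ^ 2 := by
    calc (⟪A x, x⟫_ℂ).re ≤ ‖⟪A x, x⟫_ℂ‖ := Complex.re_le_norm _
      _ ≤ ‖A x‖ * ‖x‖ := norm_inner_le_norm _ _
      _ ≤ ‖A‖ * ‖x‖ * ‖x‖ := by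
          have := A.le_opNorm x
          nlinarith [norm_nonneg x]
      _ = ‖A‖ * ‖x‖ ^ 2 := by ring
  calc aNorm A x = Real.sqrt (⟪A x, x⟫_ℂ).re := rfl
    _ ≤ Real.sqrt (‖A‖ * ‖x‖ ^ 2) := Real.sqrt_le_sqrt h
    _ = Real.sqrt ‖A‖ * ‖x‖ := by
        rw [Real.sqrt_mul (norm_nonneg _), Real.sqrt_sq (norm_nonneg _)]

lemma aNorm_smul (c : ℂ) (x : H) : aNorm A (c • x) = ‖c‖ * aNorm A x := by
  have e : ⟪A (c • x), c • x⟫_ℂ = ((Complex.normSq c : ℝ) : ℂ) * ⟪A x, x⟫_ℂ := by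
    rw [map_smul, inner_smul_left, inner_smul_right, ← mul_assoc]
    congr 1
    rw [Complex.normSq_eq_conj_mul_self]
  rw [aNorm, e, Complex.re_ofReal_mul, Real.sqrt_mul (Complex.normSq_nonneg _),
    ← Complex.norm_def, aNorm]

end helpers

section ops
set_option linter.unusedSectionVars false
variable {A : H →L[ℂ] H}

lemma aNorm_neg (x : H) : aNorm A (-x) = aNorm A x := by
  have := aNorm_smul (A := A) (-1 : ℂ) x
  simpa using this

lemma aNorm_sub (hA : A.IsPositive) (x y : H) : aNorm A (x - y) ≤ aNorm A x + aNorm A y := by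
  rw [sub_eq_add_neg]
  calc aNorm A (x + -y) ≤ aNorm A x + aNorm A (-y) := aNorm_add hA x (-y)
    _ = aNorm A x + aNorm A y := by rw [aNorm_neg]

lemma mem_P_add {x y : H} (hx : x ∈ closure (Set.range (⇑A))) (hy : y ∈ closure (Set.range (⇑A))) :
    x + y ∈ closure (Set.range (⇑A)) := by
  have e : closure (Set.range (⇑A)) =
      ↑(LinearMap.range (A : H →ₗ[ℂ] H)).topologicalClosure := by
    rw [Submodule.topologicalClosure_coe, LinearMap.coe_range, ContinuousLinearMap.coe_coe]
  rw [e] at hx hy ⊢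
  exact Submodule.add_mem _ hx hy

lemma mem_P_smul {x : H} (c : ℂ) (hx : x ∈ closure (Set.range (⇑A))) :
    c • x ∈ closure (Set.range (⇑A)) := by
  have e : closure (Set.range (⇑A)) =
      ↑(LinearMap.range (A : H →ₗ[ℂ] H)).topologicalClosure := by
    rw [Submodule.topologicalClosure_coe, LinearMap.coe_range, ContinuousLinearMap.coe_coe]
  rw [e] at hx ⊢
  exact Submodule.smul_mem _ c hx

lemma flip' (hA : A.IsPositive) {S T : H →L[ℂ] H}
    (h : A ∘L S = (ContinuousLinearMap.adjoint T) ∘L A) :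
    A ∘L T = (ContinuousLinearMap.adjoint S) ∘L A := by
  have hAdj : ContinuousLinearMap.adjoint A = A := hA.isSelfAdjoint.adjoint_eq
  have h2 := congrArg ContinuousLinearMap.adjoint h
  rw [ContinuousLinearMap.adjoint_comp, ContinuousLinearMap.adjoint_comp,
    ContinuousLinearMap.adjoint_adjoint, hAdj] at h2
  exact h2.symm

/-- key step: for `A`-selfadjoint `R`, `‖Rx‖_A² ≤ ‖x‖_A ‖R²x‖_A`. -/
lemma sa_step (hA : A.IsPositive) {R : H →L[ℂ] H}
    (hR : A ∘L R = (ContinuousLinearMap.adjoint R) ∘L A) (x : H) :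
    aNorm A (R x) ^ 2 ≤ aNorm A x * aNorm A (R (R x)) := by
  have e : A (R x) = (ContinuousLinearMap.adjoint R) (A x) := by
    have := ContinuousLinearMap.ext_iff.1 hR x
    simpa using this
  rw [aNorm_sq hA, e, ContinuousLinearMap.adjoint_inner_left]
  exact cs' hA x (R (R x))

lemma sa_pow (hA : A.IsPositive) {R : H →L[ℂ] H}
    (hR : A ∘L R = (ContinuousLinearMap.adjoint R) ∘L A) (n : ℕ) :
    A ∘L (R ^ n) = (ContinuousLinearMap.adjoint (R ^ n)) ∘L A := by
  induction n with
  | zero => simp [ContinuousLinearMap.one_def, ContinuousLinearMap.adjoint_id]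
  | succ n ih =>
    have e1 : R ^ (n + 1) = (R ^ n) ∘L R := by rw [pow_succ]; rfl
    have e2 : R ^ (n + 1) = R ∘L (R ^ n) := by rw [pow_succ']; rfl
    rw [e1, ← ContinuousLinearMap.comp_assoc, ih, ContinuousLinearMap.comp_assoc, hR,
      ← ContinuousLinearMap.comp_assoc]
    have hadj : ContinuousLinearMap.adjoint (R ^ n) = (ContinuousLinearMap.adjoint R) ^ n := by
      rw [← ContinuousLinearMap.star_eq_adjoint, ← ContinuousLinearMap.star_eq_adjoint, star_pow]
    congr 1
    rw [ContinuousLinearMap.adjoint_comp, hadj]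
    show (ContinuousLinearMap.adjoint R) ^ n * ContinuousLinearMap.adjoint R =
      ContinuousLinearMap.adjoint R * (ContinuousLinearMap.adjoint R) ^ n
    rw [← pow_succ, ← pow_succ']

lemma sa_bound (hA : A.IsPositive) {R : H →L[ℂ] H}
    (hR : A ∘L R = (ContinuousLinearMap.adjoint R) ∘L A) (x : H) :
    aNorm A (R x) ≤ ‖R‖ * aNorm A x := by
  by_contra hcon
  push_neg at hcon
  set a := aNorm A (R x) with ha
  set b := aNorm A x with hb
  set c := ‖R‖ with hc
  have hbn : 0 ≤ b := aNorm_nonneg' x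
  have hcn : 0 ≤ c := norm_nonneg R
  have hapos : 0 < a := lt_of_le_of_lt (mul_nonneg hcn hbn) hcon
  -- main induction
  have main : ∀ n : ℕ, a ^ (2 ^ n) ≤ b ^ (2 ^ n - 1) * aNorm A ((R ^ (2 ^ n)) x) := by
    intro n
    induction n with
    | zero => simp [ha]
    | succ n ih =>
      have hm : (2:ℕ) ^ (n+1) = 2 ^ n + 2 ^ n := by ring
      have hstep := sa_step hA (sa_pow hA hR (2 ^ n)) x
      have hRR : (R ^ (2 ^ n)) ((R ^ (2 ^ n)) x) = (R ^ (2 ^ n + 2 ^ n)) x := by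
        rw [pow_add]
        rfl
      rw [hRR] at hstep
      have h1 : a ^ (2 ^ (n+1)) = (a ^ (2 ^ n)) ^ 2 := by
        rw [pow_succ, pow_mul]
      rw [h1]
      calc (a ^ 2 ^ n) ^ 2 ≤ (b ^ (2 ^ n - 1) * aNorm A ((R ^ 2 ^ n) x)) ^ 2 := by
            apply pow_le_pow_left₀ (pow_nonneg (le_of_lt hapos) _) ih
        _ = b ^ (2 ^ n - 1) * b ^ (2 ^ n - 1) * aNorm A ((R ^ 2 ^ n) x) ^ 2 := by ring
        _ ≤ b ^ (2 ^ n - 1) * b ^ (2 ^ n - 1) * (b * aNorm A ((R ^ (2 ^ n + 2 ^ n)) x)) := by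
            apply mul_le_mul_of_nonneg_left hstep
            positivity
        _ = b ^ (2 ^ n - 1 + (2 ^ n - 1) + 1) * aNorm A ((R ^ (2 ^ n + 2 ^ n)) x) := by
            rw [pow_add, pow_add]
            ring
        _ = b ^ (2 ^ (n+1) - 1) * aNorm A ((R ^ (2 ^ (n+1))) x) := by
            have h2 : 1 ≤ (2:ℕ) ^ n := Nat.one_le_two_pow
            have e3 : (2:ℕ) ^ (n+1) = 2 ^ n + 2 ^ n := by ring
            rw [e3]
            rcases Nat.exists_eq_add_of_le h2 with ⟨k, hk⟩
            rw [hk]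
            congr 2
            omega
  -- global upper bound
  set K := Real.sqrt ‖A‖ * ‖x‖ with hK
  have hKn : 0 ≤ K := mul_nonneg (Real.sqrt_nonneg _) (norm_nonneg _)
  have bound : ∀ n : ℕ, a ^ (2 ^ n) ≤ b ^ (2 ^ n - 1) * (c ^ (2 ^ n) * K) := by
    intro n
    refine (main n).trans ?_
    apply mul_le_mul_of_nonneg_left _ (pow_nonneg hbn _)
    calc aNorm A ((R ^ (2 ^ n)) x) ≤ Real.sqrt ‖A‖ * ‖(R ^ (2 ^ n)) x‖ := aNorm_le_norm _
      _ ≤ Real.sqrt ‖A‖ * (‖R ^ (2 ^ n)‖ * ‖x‖) := by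
          apply mul_le_mul_of_nonneg_left (ContinuousLinearMap.le_opNorm _ _) (Real.sqrt_nonneg _)
      _ ≤ Real.sqrt ‖A‖ * (c ^ (2 ^ n) * ‖x‖) := by
          have := norm_pow_le' R (n := 2 ^ n) (by positivity)
          apply mul_le_mul_of_nonneg_left _ (Real.sqrt_nonneg _)
          apply mul_le_mul_of_nonneg_right this (norm_nonneg _)
      _ = c ^ (2 ^ n) * K := by rw [hK]; ring
  -- derive contradiction
  rcases eq_or_lt_of_le hbn with hb0 | hbpos
  · -- b = 0
    have := bound 1
    rw [← hb0] at this
    simp at this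
    nlinarith [this, hapos]
  rcases eq_or_lt_of_le hcn with hc0 | hcpos
  · have := bound 1
    rw [← hc0] at this
    simp at this
    nlinarith [this, hapos]
  -- c > 0, b > 0
  set r := a / (c * b) with hr
  have hr1 : 1 < r := by
    rw [hr]
    rw [lt_div_iff₀ (by positivity)]
    linarith [hcon]
  have hle : ∀ n : ℕ, r ^ (2 ^ n) ≤ K / b := by
    intro n
    have hbpow : (0:ℝ) < b ^ (2 ^ n) := pow_pos hbpos _
    have hcbpow : (0:ℝ) < (c * b) ^ (2 ^ n) := pow_pos (by positivity) _
    rw [hr, div_pow, div_le_div_iff₀ hcbpow hbpos]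
    have e : b ^ (2 ^ n - 1) * b = b ^ (2 ^ n) := by
      rw [← pow_succ, Nat.sub_add_cancel Nat.one_le_two_pow]
    calc a ^ 2 ^ n * b ≤ b ^ (2 ^ n - 1) * (c ^ (2 ^ n) * K) * b := by
          apply mul_le_mul_of_nonneg_right (bound n) hbn
      _ = (b ^ (2 ^ n - 1) * b) * c ^ (2 ^ n) * K := by ring
      _ = K * (c * b) ^ (2 ^ n) := by rw [e, mul_pow]; ring
  obtain ⟨n, hn⟩ := pow_unbounded_of_one_lt (K / b) hr1
  have h2n : r ^ n ≤ r ^ (2 ^ n) :=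
    pow_le_pow_right₀ (le_of_lt hr1) (Nat.le_of_lt (Nat.lt_two_pow_self (n := n)))
  have := (hle n)
  linarith [hn, h2n, this]

end ops

section ops2
set_option linter.unusedSectionVars false
variable {A : H →L[ℂ] H}

lemma adj_comp_sa (hA : A.IsPositive) {S T : H →L[ℂ] H}
    (h : A ∘L S = (ContinuousLinearMap.adjoint T) ∘L A) :
    A ∘L (S ∘L T) = (ContinuousLinearMap.adjoint (S ∘L T)) ∘L A := by
  have hf := flip' hA h
  rw [← ContinuousLinearMap.comp_assoc, h, ContinuousLinearMap.comp_assoc, hf,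
    ContinuousLinearMap.adjoint_comp, ContinuousLinearMap.comp_assoc]

lemma apply_eq (h : A ∘L S = (ContinuousLinearMap.adjoint T) ∘L A) (x : H) :
    A (S x) = (ContinuousLinearMap.adjoint T) (A x) := by
  have := ContinuousLinearMap.ext_iff.1 h x
  simpa using this

/-- `‖Tx‖_A ≤ √‖S∘T‖ ‖x‖_A` for `T` admitting an `A`-adjoint. -/
lemma adjointable_bound (hA : A.IsPositive) {S T : H →L[ℂ] H}
    (h : A ∘L S = (ContinuousLinearMap.adjoint T) ∘L A) (x : H) :
    aNorm A (T x) ≤ Real.sqrt ‖S ∘L T‖ * aNorm A x := by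
  have hsa := adj_comp_sa hA h
  have hf := flip' hA h
  have key : aNorm A (T x) ^ 2 ≤ ‖S ∘L T‖ * aNorm A x ^ 2 := by
    have e : aNorm A (T x) ^ 2 = (⟪A x, (S ∘L T) x⟫_ℂ).re := by
      rw [aNorm_sq hA, apply_eq hf, ContinuousLinearMap.adjoint_inner_left]
      rfl
    rw [e]
    calc (⟪A x, (S ∘L T) x⟫_ℂ).re ≤ aNorm A x * aNorm A ((S ∘L T) x) := cs' hA x _
      _ ≤ aNorm A x * (‖S ∘L T‖ * aNorm A x) := by
          apply mul_le_mul_of_nonneg_left (sa_bound hA hsa x) (aNorm_nonneg' x)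
      _ = ‖S ∘L T‖ * aNorm A x ^ 2 := by ring
  calc aNorm A (T x) = Real.sqrt (aNorm A (T x) ^ 2) := by
        rw [Real.sqrt_sq (aNorm_nonneg' _)]
    _ ≤ Real.sqrt (‖S ∘L T‖ * aNorm A x ^ 2) := Real.sqrt_le_sqrt key
    _ = Real.sqrt ‖S ∘L T‖ * aNorm A x := by
        rw [Real.sqrt_mul (norm_nonneg _), Real.sqrt_sq (aNorm_nonneg' _)]

lemma aOpNorm_nonneg (T : H →L[ℂ] H) : 0 ≤ aOpNorm A T := by
  apply Real.sSup_nonneg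
  rintro r ⟨x, -, -, rfl⟩
  exact aNorm_nonneg' _

lemma aOpNorm_le {T : H →L[ℂ] H} {M : ℝ} (hM : 0 ≤ M)
    (h : ∀ x : H, x ∈ closure (Set.range (⇑A)) → aNorm A x = 1 → aNorm A (T x) ≤ M) :
    aOpNorm A T ≤ M := by
  apply Real.sSup_le _ hM
  rintro r ⟨x, hx, hx1, rfl⟩
  exact h x hx hx1

/-- the sup property: `‖Ty‖_A ≤ ‖T‖_A ‖y‖_A` for `y` in the closure of the range of `A`. -/
lemma aOpNorm_bound (hA : A.IsPositive) {S T : H →L[ℂ] H}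
    (h : A ∘L S = (ContinuousLinearMap.adjoint T) ∘L A) {y : H}
    (hy : y ∈ closure (Set.range (⇑A))) :
    aNorm A (T y) ≤ aOpNorm A T * aNorm A y := by
  rcases eq_or_lt_of_le (aNorm_nonneg' (A := A) y) with h0 | hpos
  · have := adjointable_bound hA h y
    rw [← h0] at this ⊢
    simpa using this
  · set t := aNorm A y with ht
    set x := ((t : ℂ))⁻¹ • y with hx
    have hxP : x ∈ closure (Set.range (⇑A)) := mem_P_smul _ hy
    have hx1 : aNorm A x = 1 := by
      rw [hx, aNorm_smul, ← ht]
      rw [norm_inv, Complex.norm_real, Real.norm_of_nonneg (le_of_lt hpos)]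
      field_simp
    have hmem : aNorm A (T x) ∈
        {r : ℝ | ∃ x : H, x ∈ closure (Set.range (⇑A)) ∧ aNorm A x = 1 ∧ r = aNorm A (T x)} :=
      ⟨x, hxP, hx1, rfl⟩
    have hbdd : BddAbove
        {r : ℝ | ∃ x : H, x ∈ closure (Set.range (⇑A)) ∧ aNorm A x = 1 ∧ r = aNorm A (T x)} := by
      refine ⟨Real.sqrt ‖S ∘L T‖, ?_⟩
      rintro r ⟨z, -, hz1, rfl⟩
      have := adjointable_bound hA h z
      rw [hz1, mul_one] at this
      exact this
    have hle : aNorm A (T x) ≤ aOpNorm A T := le_csSup hbdd hmem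
    have e : aNorm A (T x) = t⁻¹ * aNorm A (T y) := by
      rw [hx, map_smul, aNorm_smul, norm_inv, Complex.norm_real,
        Real.norm_of_nonneg (le_of_lt hpos)]
    rw [e] at hle
    have h2 := mul_le_mul_of_nonneg_left hle (le_of_lt hpos)
    have e2 : t * (t⁻¹ * aNorm A (T y)) = aNorm A (T y) := by field_simp
    rw [e2] at h2
    linarith [h2]

end ops2

section ops3
set_option linter.unusedSectionVars false
variable {A : H →L[ℂ] H}

lemma chainST (hA : A.IsPositive) {S T : H →L[ℂ] H}
    (h : A ∘L S = (ContinuousLinearMap.adjoint T) ∘L A)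
    (hSr : Set.range (⇑S) ⊆ closure (Set.range (⇑A))) {x : H}
    (hx : x ∈ closure (Set.range (⇑A))) (hx1 : aNorm A x = 1) :
    aNorm A (S (T x)) ≤ aOpNorm A T ^ 2 := by
  set M := aOpNorm A T with hM
  have hMn : 0 ≤ M := aOpNorm_nonneg T
  have hu : aNorm A (T x) ≤ M := by
    have := aOpNorm_bound hA h hx
    rwa [hx1, mul_one] at this
  have hvP : S (T x) ∈ closure (Set.range (⇑A)) := hSr ⟨T x, rfl⟩
  have key : aNorm A (S (T x)) ^ 2 ≤ M * M * aNorm A (S (T x)) := by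
    have e : aNorm A (S (T x)) ^ 2 = (⟪A (T x), T (S (T x))⟫_ℂ).re := by
      rw [aNorm_sq hA, apply_eq h, ContinuousLinearMap.adjoint_inner_left]
    rw [e]
    calc (⟪A (T x), T (S (T x))⟫_ℂ).re ≤ aNorm A (T x) * aNorm A (T (S (T x))) := cs' hA _ _
      _ ≤ aNorm A (T x) * (M * aNorm A (S (T x))) := by
          apply mul_le_mul_of_nonneg_left (aOpNorm_bound hA h hvP) (aNorm_nonneg' _)
      _ ≤ M * (M * aNorm A (S (T x))) := by
          apply mul_le_mul_of_nonneg_right hu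
          exact mul_nonneg hMn (aNorm_nonneg' _)
      _ = M * M * aNorm A (S (T x)) := by ring
  rcases eq_or_lt_of_le (aNorm_nonneg' (A := A) (S (T x))) with h0 | hpos
  · rw [← h0]
    positivity
  · nlinarith [key, hpos]

lemma chainTS (hA : A.IsPositive) {S T : H →L[ℂ] H}
    (h : A ∘L S = (ContinuousLinearMap.adjoint T) ∘L A)
    (hSr : Set.range (⇑S) ⊆ closure (Set.range (⇑A))) {x : H}
    (hx : x ∈ closure (Set.range (⇑A))) (hx1 : aNorm A x = 1) :
    aNorm A (T (S x)) ≤ aOpNorm A T ^ 2 := by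
  set M := aOpNorm A T with hM
  have hMn : 0 ≤ M := aOpNorm_nonneg T
  have hvP : S x ∈ closure (Set.range (⇑A)) := hSr ⟨x, rfl⟩
  have hS : aNorm A (S x) ≤ M := by
    have key : aNorm A (S x) ^ 2 ≤ M * aNorm A (S x) := by
      have e : aNorm A (S x) ^ 2 = (⟪A x, T (S x)⟫_ℂ).re := by
        rw [aNorm_sq hA, apply_eq h, ContinuousLinearMap.adjoint_inner_left]
      rw [e]
      calc (⟪A x, T (S x)⟫_ℂ).re ≤ aNorm A x * aNorm A (T (S x)) := cs' hA _ _
        _ = aNorm A (T (S x)) := by rw [hx1, one_mul]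
        _ ≤ M * aNorm A (S x) := aOpNorm_bound hA h hvP
    rcases eq_or_lt_of_le (aNorm_nonneg' (A := A) (S x)) with h0 | hpos
    · rw [← h0]; exact hMn
    · nlinarith [key, hpos]
  calc aNorm A (T (S x)) ≤ M * aNorm A (S x) := aOpNorm_bound hA h hvP
    _ ≤ M * M := mul_le_mul_of_nonneg_left hS hMn
    _ = M ^ 2 := by ring

end ops3

theorem stmt9 (A T1 T2 S1 S2 : H →L[ℂ] H) (hA : A.IsPositive)
    (hS1 : A ∘L S1 = (ContinuousLinearMap.adjoint T1) ∘L A)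
    (hS1r : Set.range (⇑S1) ⊆ closure (Set.range (⇑A)))
    (hS2 : A ∘L S2 = (ContinuousLinearMap.adjoint T2) ∘L A)
    (hS2r : Set.range (⇑S2) ⊆ closure (Set.range (⇑A))) :
    min ((aOpNorm A (T1 + T2)) ^ 2) ((aOpNorm A (T1 - T2)) ^ 2) ≥
      max (aOpNorm A (S1 ∘L T1 + S2 ∘L T2) - aOpNorm A (S1 ∘L T2 + S2 ∘L T1))
          (aOpNorm A (T1 ∘L S1 + T2 ∘L S2) - aOpNorm A (T1 ∘L S2 + T2 ∘L S1)) := by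
  have hplus : A ∘L (S1 + S2) = (ContinuousLinearMap.adjoint (T1 + T2)) ∘L A := by
    rw [ContinuousLinearMap.comp_add, hS1, hS2, map_add, ContinuousLinearMap.add_comp]
  have hminus : A ∘L (S1 - S2) = (ContinuousLinearMap.adjoint (T1 - T2)) ∘L A := by
    rw [ContinuousLinearMap.comp_sub, hS1, hS2, map_sub, ContinuousLinearMap.sub_comp]
  have hplusr : Set.range (⇑(S1 + S2)) ⊆ closure (Set.range (⇑A)) := by
    rintro _ ⟨z, rfl⟩
    exact mem_P_add (hS1r ⟨z, rfl⟩) (hS2r ⟨z, rfl⟩)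
  have hminusr : Set.range (⇑(S1 - S2)) ⊆ closure (Set.range (⇑A)) := by
    rintro _ ⟨z, rfl⟩
    have e : (S1 - S2) z = S1 z + (-1 : ℂ) • S2 z := by simp [sub_eq_add_neg]
    rw [e]
    exact mem_P_add (hS1r ⟨z, rfl⟩) (mem_P_smul _ (hS2r ⟨z, rfl⟩))
  -- A-selfadjointness of the cross terms
  have hD : A ∘L (S1 ∘L T2 + S2 ∘L T1) =
      (ContinuousLinearMap.adjoint (S1 ∘L T2 + S2 ∘L T1)) ∘L A := by
    have e1 : A ∘L (S1 ∘L T2) = (ContinuousLinearMap.adjoint (S2 ∘L T1)) ∘L A := by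
      rw [← ContinuousLinearMap.comp_assoc, hS1, ContinuousLinearMap.comp_assoc, flip' hA hS2,
        ← ContinuousLinearMap.comp_assoc, ← ContinuousLinearMap.adjoint_comp]
    have e2 : A ∘L (S2 ∘L T1) = (ContinuousLinearMap.adjoint (S1 ∘L T2)) ∘L A := by
      rw [← ContinuousLinearMap.comp_assoc, hS2, ContinuousLinearMap.comp_assoc, flip' hA hS1,
        ← ContinuousLinearMap.comp_assoc, ← ContinuousLinearMap.adjoint_comp]
    rw [ContinuousLinearMap.comp_add, e1, e2, map_add, ContinuousLinearMap.add_comp, add_comm]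
  have hD' : A ∘L (T1 ∘L S2 + T2 ∘L S1) =
      (ContinuousLinearMap.adjoint (T1 ∘L S2 + T2 ∘L S1)) ∘L A := by
    have e1 : A ∘L (T1 ∘L S2) = (ContinuousLinearMap.adjoint (T2 ∘L S1)) ∘L A := by
      rw [← ContinuousLinearMap.comp_assoc, flip' hA hS1, ContinuousLinearMap.comp_assoc, hS2,
        ← ContinuousLinearMap.comp_assoc, ← ContinuousLinearMap.adjoint_comp]
    have e2 : A ∘L (T2 ∘L S1) = (ContinuousLinearMap.adjoint (T1 ∘L S2)) ∘L A := by
      rw [← ContinuousLinearMap.comp_assoc, flip' hA hS2, ContinuousLinearMap.comp_assoc, hS1,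
        ← ContinuousLinearMap.comp_assoc, ← ContinuousLinearMap.adjoint_comp]
    rw [ContinuousLinearMap.comp_add, e1, e2, map_add, ContinuousLinearMap.add_comp, add_comm]
  -- algebraic identities
  have hId1 : (S1 + S2) ∘L (T1 + T2) =
      (S1 ∘L T1 + S2 ∘L T2) + (S1 ∘L T2 + S2 ∘L T1) := by
    rw [ContinuousLinearMap.add_comp, ContinuousLinearMap.comp_add,
      ContinuousLinearMap.comp_add]
    abel
  have hId2 : (S1 - S2) ∘L (T1 - T2) =
      (S1 ∘L T1 + S2 ∘L T2) - (S1 ∘L T2 + S2 ∘L T1) := by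
    rw [ContinuousLinearMap.sub_comp, ContinuousLinearMap.comp_sub,
      ContinuousLinearMap.comp_sub]
    abel
  have hId1' : (T1 + T2) ∘L (S1 + S2) =
      (T1 ∘L S1 + T2 ∘L S2) + (T1 ∘L S2 + T2 ∘L S1) := by
    rw [ContinuousLinearMap.add_comp, ContinuousLinearMap.comp_add,
      ContinuousLinearMap.comp_add]
    abel
  have hId2' : (T1 - T2) ∘L (S1 - S2) =
      (T1 ∘L S1 + T2 ∘L S2) - (T1 ∘L S2 + T2 ∘L S1) := by
    rw [ContinuousLinearMap.sub_comp, ContinuousLinearMap.comp_sub,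
      ContinuousLinearMap.comp_sub]
    abel
  set Mp := aOpNorm A (T1 + T2) with hMp
  set Mm := aOpNorm A (T1 - T2) with hMm
  set b := aOpNorm A (S1 ∘L T2 + S2 ∘L T1) with hb
  set b' := aOpNorm A (T1 ∘L S2 + T2 ∘L S1) with hb'
  have hbn : 0 ≤ b := aOpNorm_nonneg _
  have hb'n : 0 ≤ b' := aOpNorm_nonneg _
  have hC1 : aOpNorm A (S1 ∘L T1 + S2 ∘L T2) ≤ Mp ^ 2 + b := by
    apply aOpNorm_le (add_nonneg (sq_nonneg _) hbn)
    intro x hx hx1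
    have e : (S1 ∘L T1 + S2 ∘L T2) x = ((S1 + S2) ∘L (T1 + T2)) x
        - (S1 ∘L T2 + S2 ∘L T1) x := by
      rw [hId1]; simp
    rw [e]
    calc aNorm A (((S1 + S2) ∘L (T1 + T2)) x - (S1 ∘L T2 + S2 ∘L T1) x)
        ≤ aNorm A (((S1 + S2) ∘L (T1 + T2)) x) + aNorm A ((S1 ∘L T2 + S2 ∘L T1) x) :=
          aNorm_sub hA _ _
      _ ≤ Mp ^ 2 + b := by
          apply add_le_add
          · exact chainST hA hplus hplusr hx hx1
          · have := aOpNorm_bound hA hD hx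
            rwa [hx1, mul_one] at this
  have hC2 : aOpNorm A (S1 ∘L T1 + S2 ∘L T2) ≤ Mm ^ 2 + b := by
    apply aOpNorm_le (add_nonneg (sq_nonneg _) hbn)
    intro x hx hx1
    have e : (S1 ∘L T1 + S2 ∘L T2) x = ((S1 - S2) ∘L (T1 - T2)) x
        + (S1 ∘L T2 + S2 ∘L T1) x := by
      rw [hId2]; simp
    rw [e]
    calc aNorm A (((S1 - S2) ∘L (T1 - T2)) x + (S1 ∘L T2 + S2 ∘L T1) x)
        ≤ aNorm A (((S1 - S2) ∘L (T1 - T2)) x) + aNorm A ((S1 ∘L T2 + S2 ∘L T1) x) :=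
          aNorm_add hA _ _
      _ ≤ Mm ^ 2 + b := by
          apply add_le_add
          · exact chainST hA hminus hminusr hx hx1
          · have := aOpNorm_bound hA hD hx
            rwa [hx1, mul_one] at this
  have hC1' : aOpNorm A (T1 ∘L S1 + T2 ∘L S2) ≤ Mp ^ 2 + b' := by
    apply aOpNorm_le (add_nonneg (sq_nonneg _) hb'n)
    intro x hx hx1
    have e : (T1 ∘L S1 + T2 ∘L S2) x = ((T1 + T2) ∘L (S1 + S2)) x
        - (T1 ∘L S2 + T2 ∘L S1) x := by
      rw [hId1']; simp
    rw [e]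
    calc aNorm A (((T1 + T2) ∘L (S1 + S2)) x - (T1 ∘L S2 + T2 ∘L S1) x)
        ≤ aNorm A (((T1 + T2) ∘L (S1 + S2)) x) + aNorm A ((T1 ∘L S2 + T2 ∘L S1) x) :=
          aNorm_sub hA _ _
      _ ≤ Mp ^ 2 + b' := by
          apply add_le_add
          · exact chainTS hA hplus hplusr hx hx1
          · have := aOpNorm_bound hA hD' hx
            rwa [hx1, mul_one] at this
  have hC2' : aOpNorm A (T1 ∘L S1 + T2 ∘L S2) ≤ Mm ^ 2 + b' := by
    apply aOpNorm_le (add_nonneg (sq_nonneg _) hb'n)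
    intro x hx hx1
    have e : (T1 ∘L S1 + T2 ∘L S2) x = ((T1 - T2) ∘L (S1 - S2)) x
        + (T1 ∘L S2 + T2 ∘L S1) x := by
      rw [hId2']; simp
    rw [e]
    calc aNorm A (((T1 - T2) ∘L (S1 - S2)) x + (T1 ∘L S2 + T2 ∘L S1) x)
        ≤ aNorm A (((T1 - T2) ∘L (S1 - S2)) x) + aNorm A ((T1 ∘L S2 + T2 ∘L S1) x) :=
          aNorm_add hA _ _
      _ ≤ Mm ^ 2 + b' := by
          apply add_le_add
          · exact chainTS hA hminus hminusr hx hx1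
          · have := aOpNorm_bound hA hD' hx
            rwa [hx1, mul_one] at this
  rw [ge_iff_le]
  refine max_le (le_min ?_ ?_) (le_min ?_ ?_)
  · linarith [hC1]
  · linarith [hC2]
  · linarith [hC1']
  · linarith [hC2']
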